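/- Let A and B be finite-dimensional algebras over a field k graded by abelian groups Γ₁, Γ₂, with twisted tensor product A⊗^tB with respect to a bicharacter t. Then there is an isomorphism of graded A⊗^tB-modules Hom_k(A⊗^tB, k) ≅ Hom_k(A,k) ⊗^t Hom_k(B,k). -/
import Mathlib


/-!
STATEMENT 17: Let `A` and `B` be finite dimensional algebras over a field `k`
graded by abelian groups `Γ₁`, `Γ₂`, with twisted tensor product `A ⊗^t B`
with respect to a bicharacter `t`.  Then there is an isomorphism of graded
`A ⊗^t B`-modules `Hom_k(A ⊗^t B, k) ≅ Hom_k(A, k) ⊗^t Hom_k(B, k)`.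

Everything is phrased in terms of homogeneous components: the graded algebras
are given as families of finite dimensional `k`-vector spaces with bilinear
multiplication maps; the dual `D(X)` has components `D(X)_γ = Hom_k(X_{-γ},k)`;
the right `A ⊗^t B`-module structure on `D(A ⊗^t B)` is `(φ·c)(x) = φ(c·x)`
(using the twisted multiplication), and on `D(A) ⊗^t D(B)` it is the twisted
action `(m ⊗ n)(a ⊗ b) = t(|a|,|n|)(ma ⊗ nb)` with `(m·a)(x) = m(ax)`.  An
isomorphism of graded modules is a family of `k`-linear equivalences in each
degree intertwining the actions of all homogeneous elements.
-/

open scoped TensorProduct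

universe u

/-- Transport along an equality of degrees, as a linear map. -/
noncomputable def lcast {k : Type u} [Field k] {Γ : Type u}
    {F : Γ → Type u} [∀ γ, AddCommGroup (F γ)] [∀ γ, Module k (F γ)]
    {γ γ' : Γ} (h : γ = γ') : F γ →ₗ[k] F γ' := by
  subst h; exact LinearMap.id

lemma dualDistrib_naturality {k : Type u} [Field k]
    {M N M' N' : Type u} [AddCommGroup M] [AddCommGroup N] [AddCommGroup M'] [AddCommGroup N']
    [Module k M] [Module k N] [Module k M'] [Module k N']
    (K : M →ₗ[k] M') (L : N →ₗ[k] N')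
    (ψ : Module.Dual k M' ⊗[k] Module.Dual k N') :
    TensorProduct.dualDistrib k M N (TensorProduct.map K.dualMap L.dualMap ψ)
      = (TensorProduct.map K L).dualMap (TensorProduct.dualDistrib k M' N' ψ) := by
  induction ψ using TensorProduct.induction_on with
  | zero => simp
  | tmul f g =>
    apply LinearMap.ext; intro x
    induction x using TensorProduct.induction_on with
    | zero => simp
    | tmul m n => simp
    | add x y hx hy => simp_all [map_add]
  | add x y hx hy => simp [map_add, hx, hy]

lemma dualDistribEquiv_symm_naturality {k : Type u} [Field k]
    {M N M' N' : Type u} [AddCommGroup M] [AddCommGroup N] [AddCommGroup M'] [AddCommGroup N']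
    [Module k M] [Module k N] [Module k M'] [Module k N']
    [Module.Finite k M] [Module.Finite k N] [Module.Finite k M'] [Module.Finite k N']
    (K : M →ₗ[k] M') (L : N →ₗ[k] N')
    (φ : Module.Dual k (M' ⊗[k] N')) :
    (TensorProduct.dualDistribEquiv k M N).symm ((TensorProduct.map K L).dualMap φ)
      = TensorProduct.map K.dualMap L.dualMap
          ((TensorProduct.dualDistribEquiv k M' N').symm φ) := by
  apply (TensorProduct.dualDistribEquiv k M N).injective
  rw [LinearEquiv.apply_symm_apply]
  have h1 : ∀ ψ, TensorProduct.dualDistribEquiv k M N ψ = TensorProduct.dualDistrib k M N ψ :=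
    fun _ => rfl
  have h2 : ∀ ψ, TensorProduct.dualDistribEquiv k M' N' ψ = TensorProduct.dualDistrib k M' N' ψ :=
    fun _ => rfl
  rw [h1, dualDistrib_naturality, ← h2, LinearEquiv.apply_symm_apply]

theorem dual_of_twisted_tensor_product_iso
    (k : Type u) [Field k]
    (Γ₁ Γ₂ : Type u) [AddCommGroup Γ₁] [AddCommGroup Γ₂]
    (A : Γ₁ → Type u) [∀ γ, AddCommGroup (A γ)] [∀ γ, Module k (A γ)]
    [∀ γ, FiniteDimensional k (A γ)]
    (B : Γ₂ → Type u) [∀ γ, AddCommGroup (B γ)] [∀ γ, Module k (B γ)]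
    [∀ γ, FiniteDimensional k (B γ)]
    -- graded multiplications on `A` and `B`, associative (up to the canonical
    -- identification of degrees)
    (mulA : ∀ γ γ' : Γ₁, A γ →ₗ[k] A γ' →ₗ[k] A (γ + γ'))
    (mulAassoc : ∀ (γ₁ γ₂ γ₃ : Γ₁) (x : A γ₁) (y : A γ₂) (z : A γ₃),
      HEq (mulA (γ₁ + γ₂) γ₃ (mulA γ₁ γ₂ x y) z)
          (mulA γ₁ (γ₂ + γ₃) x (mulA γ₂ γ₃ y z)))
    (mulB : ∀ γ γ' : Γ₂, B γ →ₗ[k] B γ' →ₗ[k] B (γ + γ'))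
    (mulBassoc : ∀ (γ₁ γ₂ γ₃ : Γ₂) (x : B γ₁) (y : B γ₂) (z : B γ₃),
      HEq (mulB (γ₁ + γ₂) γ₃ (mulB γ₁ γ₂ x y) z)
          (mulB γ₁ (γ₂ + γ₃) x (mulB γ₂ γ₃ y z)))
    -- a bicharacter `t : Γ₁ × Γ₂ → k^×`
    (t : Γ₁ → Γ₂ → kˣ)
    (ht₀ : ∀ γ₂, t 0 γ₂ = 1) (ht₀' : ∀ γ₁, t γ₁ 0 = 1)
    (htadd : ∀ γ₁ γ₁' γ₂, t (γ₁ + γ₁') γ₂ = t γ₁ γ₂ * t γ₁' γ₂)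
    (htadd' : ∀ γ₁ γ₂ γ₂', t γ₁ (γ₂ + γ₂') = t γ₁ γ₂ * t γ₁ γ₂') :
    -- there is a family of `k`-linear equivalences
    -- `D(A ⊗^t B)_p ≃ (D(A) ⊗^t D(B))_p` ...
    ∃ e : ∀ p : Γ₁ × Γ₂,
      Module.Dual k (A (-p.1) ⊗[k] B (-p.2)) ≃ₗ[k]
        (Module.Dual k (A (-p.1)) ⊗[k] Module.Dual k (B (-p.2))),
      -- ... intertwining the right actions of all homogeneous elements
      -- `a ⊗ b` of `A ⊗^t B`:
      ∀ (p q : Γ₁ × Γ₂) (a : A q.1) (b : B q.2)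
        (φ : Module.Dual k (A (-p.1) ⊗[k] B (-p.2))),
        e (p + q)
          -- the action `φ · (a ⊗ b)` on the dual of the twisted tensor
          -- algebra, `(φ·(a⊗b))(x ⊗ y) = t(|x|,|b|) φ((ax) ⊗ (by))`:
          ((t (-(p.1 + q.1)) q.2 : k) •
            (LinearMap.dualMap
              (TensorProduct.map
                ((lcast (k := k) (F := A) (by abel :
                    q.1 + -(p.1 + q.1) = -p.1)).comp
                  (mulA q.1 (-(p.1 + q.1)) a))
                ((lcast (k := k) (F := B) (by abel :
                    q.2 + -(p.2 + q.2) = -p.2)).comp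
                  (mulB q.2 (-(p.2 + q.2)) b))) φ))
        = -- the twisted action `(m ⊗ n)·(a ⊗ b) = t(|a|,|n|)(m·a ⊗ n·b)`
          -- on `D(A) ⊗^t D(B)`, with `(m·a)(x) = m(ax)`:
          (t q.1 p.2 : k) •
            (TensorProduct.map
              (LinearMap.dualMap
                ((lcast (k := k) (F := A) (by abel :
                    q.1 + -(p.1 + q.1) = -p.1)).comp
                  (mulA q.1 (-(p.1 + q.1)) a)))
              (LinearMap.dualMap
                ((lcast (k := k) (F := B) (by abel :
                    q.2 + -(p.2 + q.2) = -p.2)).comp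
                  (mulB q.2 (-(p.2 + q.2)) b)))
              (e p φ)) := by
  have tneg : ∀ (x : Γ₁) (y : Γ₂), t (-x) y = (t x y)⁻¹ := by
    intro x y
    have h := htadd x (-x) y
    rw [add_neg_cancel, ht₀] at h
    exact eq_inv_of_mul_eq_one_right h.symm
  refine ⟨fun p => (TensorProduct.dualDistribEquiv k (A (-p.1)) (B (-p.2))).symm.trans
      (LinearEquiv.smulOfUnit (t p.1 p.2)), ?_⟩
  intro p q a b φ
  set f := (lcast (k := k) (F := A) (by abel : q.1 + -(p.1 + q.1) = -p.1)).comp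
      (mulA q.1 (-(p.1 + q.1)) a) with hf
  set g := (lcast (k := k) (F := B) (by abel : q.2 + -(p.2 + q.2) = -p.2)).comp
      (mulB q.2 (-(p.2 + q.2)) b) with hg
  simp only [LinearEquiv.trans_apply, map_smul, Prod.fst_add, Prod.snd_add]
  have key := dualDistribEquiv_symm_naturality (k := k) f g φ
  have hsm : ∀ (x : Γ₁) (y : Γ₂)
      (v : Module.Dual k (A (-x)) ⊗[k] Module.Dual k (B (-y))),
      LinearEquiv.smulOfUnit (t x y) v = (t x y : k) • v := fun _ _ _ => rfl
  rw [key, hsm, hsm, map_smul, smul_smul, smul_smul]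
  congr 1
  have hu : t (-(p.1 + q.1)) q.2 * t (p.1 + q.1) (p.2 + q.2) = t q.1 p.2 * t p.1 p.2 := by
    rw [tneg, inv_mul_eq_iff_eq_mul, htadd' (p.1 + q.1) p.2 q.2, htadd p.1 q.1 p.2,
      mul_comm (t p.1 p.2) (t q.1 p.2)]
    exact mul_comm _ _
  calc (t (-(p.1 + q.1)) q.2 : k) * (t (p.1 + q.1) (p.2 + q.2) : k)
      = ((t (-(p.1 + q.1)) q.2 * t (p.1 + q.1) (p.2 + q.2) : kˣ) : k) := by rw [Units.val_mul]
    _ = ((t q.1 p.2 * t p.1 p.2 : kˣ) : k) := by rw [hu]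
    _ = (t q.1 p.2 : k) * (t p.1 p.2 : k) := by rw [Units.val_mul]
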